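/- If a ≡_r b (mod m) and k is a natural number, then a^k ≡_{(r+b)^k - b^k} b^k (mod m). -/
import Mathlib

def RCong (m r a b : ℤ) : Prop := ∃ q : ℤ, a - b = m * q + r

theorem rcong_pow (a b r m : ℤ) (hm : m ≠ 0) (k : ℕ)
    (h : RCong m r a b) : RCong m ((r + b) ^ k - b ^ k) (a ^ k) (b ^ k) := by
  obtain ⟨q, hq⟩ := h
  have hmod : a ≡ r + b [ZMOD m] := by
    have : a - (r + b) = m * q := by linarith
    exact Int.ModEq.symm (Int.modEq_iff_dvd.mpr ⟨q, by linarith⟩)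
  have hpow : a ^ k ≡ (r + b) ^ k [ZMOD m] := hmod.pow k
  obtain ⟨q', hq'⟩ := Int.ModEq.dvd hpow
  exact ⟨-q', by push_cast at hq' ⊢; linarith⟩
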